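/- If (X, Y) and (Z, W) are both bi-R-diagonal pairs in (A, φ) and the pairs are *-bi-free, then the pair (X + Z, Y + W) is bi-R-diagonal. -/

import Mathlib

open scoped Classical

/-- Labels for left (`l`) and right (`r`) indices. -/
inductive Side : Type
  | l | r
deriving DecidableEq

variable {n k : ℕ}

/-- The list of indices of `{0, …, n-1}`: first the indices labelled `l` in increasing
order, then the indices labelled `r` in decreasing order. -/
def sListFn (χ : Fin n → Side) : List (Fin n) :=
  ((List.finRange n).filter fun i => decide (χ i = Side.l)) ++
    (((List.finRange n).filter fun i => decide (χ i = Side.r)).reverse)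

lemma sListFn_length (χ : Fin n → Side) : (sListFn χ).length = n := by
  have h : ∀ i ∈ List.finRange n,
      (decide (χ i = Side.r)) = (! decide (χ i = Side.l)) := by
    intro i _; cases hx : χ i <;> simp [hx]
  simp only [sListFn, List.length_append, List.length_reverse]
  rw [List.filter_congr h, ← List.length_append,
    (List.filter_append_perm _ _).length_eq, List.length_finRange]

lemma sListFn_nodup (χ : Fin n → Side) : (sListFn χ).Nodup := by
  refine List.Nodup.append ((List.nodup_finRange n).filter _)
    (List.nodup_reverse.mpr ((List.nodup_finRange n).filter _)) ?_
  intro a ha hb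
  rw [List.mem_reverse] at hb
  rw [List.mem_filter] at ha hb
  have h1 := of_decide_eq_true ha.2
  have h2 := of_decide_eq_true hb.2
  rw [h1] at h2; cases h2

/-- The underlying function of the permutation `s_χ`. -/
def sFun (χ : Fin n → Side) : Fin n → Fin n :=
  fun i => (sListFn χ).get (Fin.cast (sListFn_length χ).symm i)

lemma sFun_bijective (χ : Fin n → Side) : Function.Bijective (sFun χ) := by
  have hinj : Function.Injective (sFun χ) := by
    intro a b hab
    have h := List.nodup_iff_injective_get.mp (sListFn_nodup χ) hab
    exact Fin.ext (by simpa using congrArg Fin.val h)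
  exact Finite.injective_iff_bijective.mp hinj

/-- The permutation `s_χ` associated to a map `χ : {1,…,n} → {l,r}`. -/
noncomputable def sChi (χ : Fin n → Side) : Equiv.Perm (Fin n) :=
  Equiv.ofBijective (sFun χ) (sFun_bijective χ)

/-- The action of a permutation on a partition (viewed as a setoid):
`(σ · π)` relates `x, y` iff `π` relates `σ⁻¹ x, σ⁻¹ y`. -/
def applyPerm (σ : Equiv.Perm (Fin n)) (π : Setoid (Fin n)) : Setoid (Fin n) :=
  Setoid.comap σ.symm π

/-- A partition of `{1,…,k}` (as a setoid) is non-crossing. -/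
def IsNC (π : Setoid (Fin k)) : Prop :=
  ∀ a b c d : Fin k, a < b → b < c → c < d → π.r a c → π.r b d → π.r a b

/-- A partition is bi-non-crossing with respect to `χ` iff `s_χ⁻¹ · τ` is non-crossing. -/
def IsBNC (χ : Fin k → Side) (τ : Setoid (Fin k)) : Prop :=
  IsNC (Setoid.comap (sChi χ) τ)
/-- The ordered list of elements of the block of `c : Quotient τ`, in increasing order. -/
noncomputable def blockList (τ : Setoid (Fin k)) (c : Quotient τ) : List (Fin k) :=
  (List.finRange k).filter fun i => decide (Quotient.mk τ i = c)

/-- Restrict a function on `Fin k` along a list of indices. -/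
def restrictIdx {α : Type*} (l : List (Fin k)) (f : Fin k → α) : Fin l.length → α :=
  fun j => f (l.get j)

/-- A noncommutative `*`-probability space structure on a complex `*`-algebra `A`:
a unital, linear, positive functional. -/
structure NCPS (A : Type*) [Ring A] [Algebra ℂ A] [StarRing A] where
  φ : A → ℂ
  linear : IsLinearMap ℂ φ
  unital : φ 1 = 1
  pos : ∀ a : A, 0 ≤ (φ (star a * a)).re ∧ (φ (star a * a)).im = 0

variable {A : Type*} [Ring A] [Algebra ℂ A] [StarRing A]
variable {B : Type*} [Ring B] [Algebra ℂ B] [StarRing B]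

/-- `κ_{χ,τ}(a₁,…,a_k)`: the multiplicative extension of a family of bi-free cumulant
functionals `κ` over the blocks of the partition `τ` (each block read in increasing order,
with the induced `χ`). -/
noncomputable def biCumPart (κ : ∀ m : ℕ, (Fin m → Side) → (Fin m → A) → ℂ)
    (χ : Fin k → Side) (τ : Setoid (Fin k)) (a : Fin k → A) : ℂ :=
  ∏ᶠ c : Quotient τ,
    κ (blockList τ c).length (restrictIdx (blockList τ c) χ) (restrictIdx (blockList τ c) a)

/-- `κ` is the family of bi-free cumulant functionals of `φ`: the moment–cumulant
formula holds, summing over bi-non-crossing partitions. -/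
def IsBiFreeCumulant (φ : A → ℂ) (κ : ∀ m : ℕ, (Fin m → Side) → (Fin m → A) → ℂ) : Prop :=
  ∀ (k : ℕ) (χ : Fin k → Side) (a : Fin k → A),
    φ (List.ofFn a).prod = ∑ᶠ τ ∈ {τ : Setoid (Fin k) | IsBNC χ τ}, biCumPart κ χ τ a

/-- The multiplicative extension of a family of free cumulant functionals over the blocks
of a partition. -/
noncomputable def freeCumPart (κ : ∀ m : ℕ, (Fin m → B) → ℂ)
    (π : Setoid (Fin k)) (b : Fin k → B) : ℂ :=
  ∏ᶠ c : Quotient π, κ (blockList π c).length (restrictIdx (blockList π c) b)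

/-- `κ` is the family of free cumulant functionals of `ψ`: the moment–cumulant formula
holds, summing over non-crossing partitions. -/
def IsFreeCumulant (ψ : B → ℂ) (κ : ∀ m : ℕ, (Fin m → B) → ℂ) : Prop :=
  ∀ (k : ℕ) (b : Fin k → B),
    ψ (List.ofFn b).prod = ∑ᶠ π ∈ {π : Setoid (Fin k) | IsNC π}, freeCumPart κ π b

/-- The sequence with entries in `{X, X*}` at left indices and `{Y, Y*}` at right indices,
where `ε i = true` means the `i`-th entry is starred. -/
def pairSeq (X Y : A) (χ : Fin k → Side) (ε : Fin k → Bool) : Fin k → A := fun i =>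
  match χ i, ε i with
  | Side.l, false => X
  | Side.l, true => star X
  | Side.r, false => Y
  | Side.r, true => star Y

/-- A `Bool`-sequence is alternating. -/
def AltStars (g : Fin k → Bool) : Prop :=
  ∀ (i : ℕ) (h : i + 1 < k), g ⟨i + 1, h⟩ = !g ⟨i, Nat.lt_of_succ_lt h⟩

/-- The pair `(X, Y)` is bi-R-diagonal (with respect to the bi-free cumulants `κ`):
every bi-free cumulant with left entries in `{X, X*}` and right entries in `{Y, Y*}`
vanishes if it is of odd order or if its entries fail to alternate in `*`-terms and
non-`*`-terms when read in the `χ`-order. -/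
def IsBiRDiagonal (κ : ∀ m : ℕ, (Fin m → Side) → (Fin m → A) → ℂ) (X Y : A) : Prop :=
  ∀ (k : ℕ) (χ : Fin k → Side) (ε : Fin k → Bool),
    (Odd k ∨ ¬ AltStars fun i => ε (sChi χ i)) →
      κ k χ (pairSeq X Y χ ε) = 0

/-- The pairs `(X, Y)` and `(Z, W)` are `*`-bi-free: all mixed bi-free cumulants with
entries from `{X, X*} ∪ {Z, Z*}` at left indices and `{Y, Y*} ∪ {W, W*}` at right indices
vanish. -/
def StarBiFree (κ : ∀ m : ℕ, (Fin m → Side) → (Fin m → A) → ℂ) (X Y Z W : A) : Prop :=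
  ∀ (k : ℕ) (χ : Fin k → Side) (ω ε : Fin k → Bool),
    (∃ i j, ω i ≠ ω j) →
      κ k χ (fun i => if ω i then pairSeq Z W χ ε i else pairSeq X Y χ ε i) = 0

/-- `(u_l, u_r)` is a bi-Haar unitary pair with respect to `φ`: both unitaries, the
generated `*`-algebras commute, and `φ(u_lⁿ u_rᵐ) = δ_{n+m,0}` for all `n, m ∈ ℤ`. -/
structure IsBiHaar (φ : A → ℂ) (ul ur : A) : Prop where
  mul_star_l : ul * star ul = 1
  star_mul_l : star ul * ul = 1
  mul_star_r : ur * star ur = 1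
  star_mul_r : star ur * ur = 1
  comm : Commute ul ur
  comm_sl : Commute (star ul) ur
  comm_sr : Commute ul (star ur)
  comm_ss : Commute (star ul) (star ur)
  mom_pp : ∀ p q : ℕ, φ (ul ^ p * ur ^ q) = if p + q = 0 then 1 else 0
  mom_pm : ∀ p q : ℕ, φ (ul ^ p * (star ur) ^ q) = if p = q then 1 else 0
  mom_mp : ∀ p q : ℕ, φ ((star ul) ^ p * ur ^ q) = if p = q then 1 else 0
  mom_mm : ∀ p q : ℕ, φ ((star ul) ^ p * (star ur) ^ q) = if p + q = 0 then 1 else 0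

/-- `v` is a (free) Haar unitary with respect to `ψ`: `v` is a unitary and
`ψ(vⁿ) = 0` for all `n ∈ ℤ \ {0}`. -/
structure IsHaarUnitary (ψ : B → ℂ) (v : B) : Prop where
  mul_star : v * star v = 1
  star_mul : star v * v = 1
  mom_pos : ∀ m : ℕ, 0 < m → ψ (v ^ m) = 0
  mom_neg : ∀ m : ℕ, 0 < m → ψ ((star v) ^ m) = 0

section AuxProof

instance finite_setoid {k : ℕ} : Finite (Setoid (Fin k)) := by
  refine Finite.of_injective (fun s : Setoid (Fin k) => fun a b => s.r a b) ?_
  intro s t h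
  exact Setoid.ext fun a b => iff_of_eq (congrFun (congrFun h a) b)

variable {A : Type*} [Ring A] [Algebra ℂ A] [StarRing A]
variable (κ : ∀ m : ℕ, (Fin m → Side) → (Fin m → A) → ℂ)

lemma kappa_cast {m k : ℕ} (h : m = k) (χ : Fin k → Side) (a : Fin k → A) :
    κ m (fun j => χ (Fin.cast h j)) (fun j => a (Fin.cast h j)) = κ k χ a := by
  subst h; rfl

lemma mem_blockList {k : ℕ} {τ : Setoid (Fin k)} {c : Quotient τ} {i : Fin k} :
    i ∈ blockList τ c ↔ Quotient.mk τ i = c := by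
  simp [blockList, List.mem_filter]

lemma blockList_nodup {k : ℕ} (τ : Setoid (Fin k)) (c : Quotient τ) :
    (blockList τ c).Nodup :=
  (List.nodup_finRange k).filter _

lemma blockList_top {k : ℕ} (c : Quotient (⊤ : Setoid (Fin k))) :
    blockList (⊤ : Setoid (Fin k)) c = List.finRange k := by
  refine List.filter_eq_self.mpr fun i _ => ?_
  induction c using Quotient.ind with
  | _ j => exact decide_eq_true (Quotient.sound trivial)

lemma blockList_length_lt {k : ℕ} {τ : Setoid (Fin k)} (hτ : τ ≠ ⊤) (c : Quotient τ) :
    (blockList τ c).length < k := by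
  rcases Nat.eq_zero_or_pos k with hk | hk
  · subst hk; exact absurd (Setoid.ext fun a => a.elim0) hτ
  refine lt_of_le_of_ne (le_trans (List.length_filter_le _ _) (List.length_finRange (n := k)).le) ?_
  intro hlen
  apply hτ
  have hfull : blockList τ c = List.finRange k :=
    (List.filter_sublist).eq_of_length (hlen.trans (List.length_finRange (n := k)).symm)
  have hall : ∀ i : Fin k, Quotient.mk τ i = c := by
    intro i
    have : i ∈ blockList τ c := by rw [hfull]; exact List.mem_finRange i
    exact mem_blockList.mp this
  exact Setoid.ext fun a b =>
    ⟨fun _ => trivial, fun _ => Quotient.exact ((hall a).trans (hall b).symm)⟩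

lemma kappa_restrict_finRange {k : ℕ} (χ : Fin k → Side) (a : Fin k → A)
    (l : List (Fin k)) (hl : l = List.finRange k) :
    κ l.length (restrictIdx l χ) (restrictIdx l a) = κ k χ a := by
  subst hl
  have h : (List.finRange k).length = k := List.length_finRange (n := k)
  have hget : ∀ j : Fin (List.finRange k).length,
      (List.finRange k).get j = Fin.cast h j := by
    intro j
    exact Fin.ext (by simpa using congrArg Fin.val (List.get_finRange j.isLt))
  have h1 : restrictIdx (List.finRange k) χ = fun j => χ (Fin.cast h j) := by
    funext j; simp [restrictIdx, hget j]
  have h2 : restrictIdx (List.finRange k) a = fun j => a (Fin.cast h j) := by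
    funext j; simp [restrictIdx, hget j]
  rw [h1, h2]
  exact kappa_cast κ h χ a

lemma biCumPart_top {k : ℕ} (hk : 0 < k) (χ : Fin k → Side) (a : Fin k → A) :
    biCumPart κ χ ⊤ a = κ k χ a := by
  haveI : Unique (Quotient (⊤ : Setoid (Fin k))) :=
    { default := Quotient.mk ⊤ ⟨0, hk⟩
      uniq := fun x => by
        induction x using Quotient.ind with
        | _ j => exact Quotient.sound trivial }
  rw [biCumPart, finprod_unique]
  exact kappa_restrict_finRange κ χ a _ (blockList_top _)

/-- The block decomposition equivalence for Bool-valued functions. -/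
noncomputable def blocksEquiv {k : ℕ} (τ : Setoid (Fin k)) :
    (Fin k → Bool) ≃ (∀ c : Quotient τ, Fin (blockList τ c).length → Bool) where
  toFun := fun ω c => restrictIdx (blockList τ c) ω
  invFun := fun g i => g (Quotient.mk τ i)
    ⟨(blockList τ (Quotient.mk τ i)).idxOf i,
      List.idxOf_lt_length_iff.mpr (mem_blockList.mpr rfl)⟩
  left_inv := by
    intro ω; funext i
    simpa [restrictIdx] using congrArg ω (List.idxOf_get _)
  right_inv := by
    intro g; funext c j
    have hmem : (blockList τ c).get j ∈ blockList τ c := List.get_mem _ j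
    have hc : Quotient.mk τ ((blockList τ c).get j) = c := mem_blockList.mp hmem
    have key : ∀ (c' : Quotient τ) (h : Quotient.mk τ ((blockList τ c).get j) = c')
        (x : Fin (blockList τ (Quotient.mk τ ((blockList τ c).get j))).length)
        (y : Fin (blockList τ c').length), (x : ℕ) = (y : ℕ) →
        g (Quotient.mk τ ((blockList τ c).get j)) x = g c' y := by
      intro c' h x y hxy
      subst h
      exact congrArg _ (Fin.ext hxy)
    refine key c hc _ j ?_
    show List.idxOf ((blockList τ c).get j)
      (blockList τ (Quotient.mk τ ((blockList τ c).get j))) = (j : ℕ)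
    have : (blockList τ (Quotient.mk τ ((blockList τ c).get j))).idxOf
        ((blockList τ c).get j) = (blockList τ c).idxOf ((blockList τ c).get j) := by
      rw [hc]
    rw [this, List.get_idxOf (blockList_nodup τ c)]

lemma sum_biCumPart_mixed {k : ℕ} (τ : Setoid (Fin k)) (hτ : τ ≠ ⊤)
    (χ : Fin k → Side) (a b : Fin k → A)
    (IH : ∀ m, m < k → ∀ (χ' : Fin m → Side) (a' b' : Fin m → A),
      κ m χ' (fun i => a' i + b' i)
        = ∑ ω : Fin m → Bool, κ m χ' (fun i => if ω i then b' i else a' i)) :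
    ∑ ω : Fin k → Bool, biCumPart κ χ τ (fun i => if ω i then b i else a i)
      = biCumPart κ χ τ (fun i => a i + b i) := by
  haveI : Fintype (Quotient τ) := Fintype.ofFinite _
  set G : ∀ c : Quotient τ, (Fin (blockList τ c).length → Bool) → ℂ :=
    fun c g => κ (blockList τ c).length (restrictIdx (blockList τ c) χ)
      (fun j => if g j then restrictIdx (blockList τ c) b j
        else restrictIdx (blockList τ c) a j) with hG
  have step1 : ∀ ω : Fin k → Bool,
      biCumPart κ χ τ (fun i => if ω i then b i else a i)
        = ∏ c : Quotient τ, G c (blocksEquiv τ ω c) := by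
    intro ω
    rw [biCumPart, finprod_eq_prod_of_fintype]
    rfl
  calc ∑ ω : Fin k → Bool, biCumPart κ χ τ (fun i => if ω i then b i else a i)
      = ∑ ω : Fin k → Bool, ∏ c : Quotient τ, G c (blocksEquiv τ ω c) := by
        exact Finset.sum_congr rfl fun ω _ => step1 ω
    _ = ∑ p : ∀ c : Quotient τ, Fin (blockList τ c).length → Bool,
          ∏ c : Quotient τ, G c (p c) :=
        Equiv.sum_comp (blocksEquiv τ) (fun p => ∏ c : Quotient τ, G c (p c))
    _ = ∏ c : Quotient τ, ∑ g : Fin (blockList τ c).length → Bool, G c g := by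
        have hps := Finset.prod_univ_sum
          (fun c : Quotient τ => (Finset.univ : Finset (Fin (blockList τ c).length → Bool))) G
        rw [Fintype.piFinset_univ] at hps
        exact hps.symm
    _ = biCumPart κ χ τ (fun i => a i + b i) := by
        rw [biCumPart, finprod_eq_prod_of_fintype]
        refine Finset.prod_congr rfl fun c _ => ?_
        have := (IH (blockList τ c).length (blockList_length_lt hτ c)
          (restrictIdx (blockList τ c) χ) (restrictIdx (blockList τ c) a)
          (restrictIdx (blockList τ c) b)).symm
        exact this

lemma prod_add_expand {k : ℕ} (a b : Fin k → A) :
    (List.ofFn fun i => a i + b i).prod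
      = ∑ ω : Fin k → Bool, (List.ofFn fun i => if ω i then b i else a i).prod := by
  induction k with
  | zero =>
      rw [Fintype.sum_unique]
      rfl
  | succ n IH =>
      rw [List.ofFn_succ, List.prod_cons]
      rw [← Equiv.sum_comp (Fin.consEquiv fun _ => Bool)
        (fun ω => (List.ofFn fun i => if ω i then b i else a i).prod)]
      rw [Fintype.sum_prod_type]
      have : ∀ (x : Bool) (y : Fin n → Bool),
          (List.ofFn fun i => if (Fin.consEquiv (fun _ => Bool)) (x, y) i then b i else a i).prod
            = (if x then b 0 else a 0) *
              (List.ofFn fun i : Fin n => if y i then b i.succ else a i.succ).prod := by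
        intro x y
        rw [List.ofFn_succ, List.prod_cons]
        simp [Fin.consEquiv]
      calc (a 0 + b 0) * (List.ofFn fun i : Fin n => a i.succ + b i.succ).prod
          = (∑ x : Bool, if x then b 0 else a 0) *
            ∑ y : Fin n → Bool, (List.ofFn fun i : Fin n => if y i then b i.succ else a i.succ).prod := by
            have hb : (∑ x : Bool, if x then b 0 else a 0) = a 0 + b 0 := by
              rw [Fintype.sum_bool]; simp [add_comm]
            rw [hb, IH (fun i => a i.succ) (fun i => b i.succ)]
        _ = ∑ x : Bool, ∑ y : Fin n → Bool,
              (if x then b 0 else a 0) *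
                (List.ofFn fun i : Fin n => if y i then b i.succ else a i.succ).prod :=
            Finset.sum_mul_sum _ _ _ _
        _ = ∑ x : Bool, ∑ y : Fin n → Bool,
              (List.ofFn fun i => if (Fin.consEquiv (fun _ => Bool)) (x, y) i then b i else a i).prod := by
            refine Finset.sum_congr rfl fun x _ => Finset.sum_congr rfl fun y _ => ?_
            rw [this x y]

end AuxProof

section MainProof

variable {A : Type*} [Ring A] [Algebra ℂ A] [StarRing A]

lemma isBNC_top {k : ℕ} (χ : Fin k → Side) : IsBNC χ (⊤ : Setoid (Fin k)) := by
  intro a b c d _ _ _ _ _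
  exact trivial

lemma kappa_add (S : NCPS A) (κ : ∀ m : ℕ, (Fin m → Side) → (Fin m → A) → ℂ)
    (hκ : IsBiFreeCumulant S.φ κ) :
    ∀ (k : ℕ) (χ : Fin k → Side) (a b : Fin k → A),
      κ k χ (fun i => a i + b i)
        = ∑ ω : Fin k → Bool, κ k χ (fun i => if ω i then b i else a i) := by
  intro k
  induction k using Nat.strong_induction_on with
  | _ k IH =>
  intro χ a b
  rcases Nat.eq_zero_or_pos k with hk | hk
  · subst hk
    rw [Fintype.sum_unique]
    congr 1
    funext i
    exact i.elim0
  haveI : Fintype (Setoid (Fin k)) := Fintype.ofFinite _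
  set Sfin : Finset (Setoid (Fin k)) := Finset.univ.filter (IsBNC χ) with hSfin
  have hset : {τ : Setoid (Fin k) | IsBNC χ τ} = (Sfin : Set (Setoid (Fin k))) := by
    ext τ; simp [hSfin]
  have hmom : ∀ f : Fin k → A,
      S.φ (List.ofFn f).prod = ∑ τ ∈ Sfin, biCumPart κ χ τ f := by
    intro f
    rw [hκ k χ f, hset, finsum_mem_coe_finset]
  have IH' : ∀ m, m < k → ∀ (χ' : Fin m → Side) (a' b' : Fin m → A),
      κ m χ' (fun i => a' i + b' i)
        = ∑ ω : Fin m → Bool, κ m χ' (fun i => if ω i then b' i else a' i) :=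
    fun m hm => IH m hm
  have hphi_add : ∀ (s : Finset (Fin k → Bool)) (f : (Fin k → Bool) → A),
      S.φ (∑ x ∈ s, f x) = ∑ x ∈ s, S.φ (f x) := by
    intro s f
    induction s using Finset.induction with
    | empty => simpa using S.linear.map_zero
    | insert _ _ h ih => rw [Finset.sum_insert h, Finset.sum_insert h, S.linear.map_add, ih]
  have key : ∑ τ ∈ Sfin, biCumPart κ χ τ (fun i => a i + b i)
      = ∑ τ ∈ Sfin, ∑ ω : Fin k → Bool,
          biCumPart κ χ τ (fun i => if ω i then b i else a i) := by
    rw [← hmom, prod_add_expand]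
    have hphi : S.φ (∑ ω : Fin k → Bool, (List.ofFn fun i => if ω i then b i else a i).prod)
        = ∑ ω : Fin k → Bool, S.φ ((List.ofFn fun i => if ω i then b i else a i).prod) := by
      exact hphi_add _ _
    rw [hphi, Finset.sum_comm]
    exact Finset.sum_congr rfl fun ω _ => hmom _
  have htop : (⊤ : Setoid (Fin k)) ∈ Sfin := by
    simp [hSfin, isBNC_top]
  rw [← Finset.sum_erase_add Sfin _ htop, ← Finset.sum_erase_add Sfin _ htop] at key
  have herase : ∀ τ ∈ Sfin.erase ⊤,
      ∑ ω : Fin k → Bool, biCumPart κ χ τ (fun i => if ω i then b i else a i)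
        = biCumPart κ χ τ (fun i => a i + b i) := by
    intro τ hτ
    exact sum_biCumPart_mixed κ τ (Finset.ne_of_mem_erase hτ) χ a b IH'
  rw [Finset.sum_congr rfl herase] at key
  have hcancel := add_left_cancel key
  rw [biCumPart_top κ hk χ (fun i => a i + b i)] at hcancel
  rw [hcancel]
  exact Finset.sum_congr rfl fun ω _ => biCumPart_top κ hk χ _

end MainProof

/-- the sum of two `*`-bi-free bi-R-diagonal pairs is bi-R-diagonal. -/
theorem biRDiagonal_add {A : Type*} [Ring A] [Algebra ℂ A] [StarRing A]
    (S : NCPS A) (κ : ∀ m : ℕ, (Fin m → Side) → (Fin m → A) → ℂ)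
    (hκ : IsBiFreeCumulant S.φ κ) (X Y Z W : A)
    (hXY : IsBiRDiagonal κ X Y) (hZW : IsBiRDiagonal κ Z W)
    (hfree : StarBiFree κ X Y Z W) :
    IsBiRDiagonal κ (X + Z) (Y + W) := by
  intro k χ ε hodd
  have hsplit : pairSeq (X + Z) (Y + W) χ ε
      = fun i => pairSeq X Y χ ε i + pairSeq Z W χ ε i := by
    funext i
    unfold pairSeq
    rcases hχ : χ i with _ | _ <;> rcases hε : ε i with _ | _ <;> simp [star_add]
  rw [hsplit, kappa_add S κ hκ k χ (pairSeq X Y χ ε) (pairSeq Z W χ ε)]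
  refine Finset.sum_eq_zero fun ω _ => ?_
  by_cases hω : ∃ i j, ω i ≠ ω j
  · exact hfree k χ ω ε hω
  · push_neg at hω
    by_cases hf : ∀ i, ω i = false
    · have : (fun i => if ω i then pairSeq Z W χ ε i else pairSeq X Y χ ε i)
          = pairSeq X Y χ ε := by
        funext i; rw [hf i]; simp
      rw [this]
      exact hXY k χ ε hodd
    · push_neg at hf
      obtain ⟨i0, hi0⟩ := hf
      have hi0' : ω i0 = true := by
        cases h : ω i0
        · exact absurd h hi0
        · rfl
      have : (fun i => if ω i then pairSeq Z W χ ε i else pairSeq X Y χ ε i)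
          = pairSeq Z W χ ε := by
        funext i; rw [hω i i0, hi0']; simp
      rw [this]
      exact hZW k χ ε hodd
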